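/- Let K be an infinite compact Hausdorff space whose set of isolated points is not dense. Then for every compact Hausdorff space Z and continuous irreducible surjection f : K → Z, there exist a compact Hausdorff space Z' and continuous irreducible surjections g : Z → Z' and h : K → Z' with h = g ∘ f, such that g is not injective. -/

import Mathlib

section Glue

variable {Z : Type*} [TopologicalSpace Z] [T2Space Z]

def glueSetoid (a b : Z) : Setoid Z where
  r x y := x = y ∨ (x ∈ ({a, b} : Set Z) ∧ y ∈ ({a, b} : Set Z))
  iseqv := by
    refine ⟨fun x => Or.inl rfl, ?_, ?_⟩
    · rintro x y (rfl | ⟨h1, h2⟩)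
      · exact Or.inl rfl
      · exact Or.inr ⟨h2, h1⟩
    · rintro x y z (rfl | ⟨h1, h2⟩) (rfl | ⟨h3, h4⟩)
      · exact Or.inl rfl
      · exact Or.inr ⟨h3, h4⟩
      · exact Or.inr ⟨h1, h2⟩
      · exact Or.inr ⟨h1, h4⟩

lemma glue_preimage (a b : Z) (V : Set Z)
    (hV : ({a, b} : Set Z) ⊆ V ∨ ∀ x ∈ ({a, b} : Set Z), x ∉ V) :
    Quotient.mk (glueSetoid a b) ⁻¹' (Quotient.mk (glueSetoid a b) '' V) = V := by
  ext x
  simp only [Set.mem_preimage, Set.mem_image]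
  constructor
  · rintro ⟨y, hyV, hy⟩
    have h : (glueSetoid a b).r y x := Quotient.exact hy
    rcases h with rfl | ⟨h1, h2⟩
    · exact hyV
    · rcases hV with h | h
      · exact h h2
      · exact absurd hyV (h y h1)
  · exact fun hx => ⟨x, hx, rfl⟩

lemma glue_isOpen (a b : Z) (V : Set Z) (hVo : IsOpen V)
    (hV : ({a, b} : Set Z) ⊆ V ∨ ∀ x ∈ ({a, b} : Set Z), x ∉ V) :
    IsOpen (Quotient.mk (glueSetoid a b) '' V) := by
  have : IsOpen (Quotient.mk (glueSetoid a b) ⁻¹' (Quotient.mk (glueSetoid a b) '' V)) := by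
    rw [glue_preimage a b V hV]; exact hVo
  exact isOpen_coinduced.mpr this

lemma glue_disjoint (a b : Z) {V V' : Set Z} (hd : Disjoint V V')
    (hV' : ∀ x ∈ ({a, b} : Set Z), x ∉ V') :
    Disjoint (Quotient.mk (glueSetoid a b) '' V) (Quotient.mk (glueSetoid a b) '' V') := by
  rw [Set.disjoint_left]
  rintro p ⟨v, hv, rfl⟩ ⟨v', hv', he⟩
  have h : (glueSetoid a b).r v' v := Quotient.exact he
  rcases h with rfl | ⟨h1, _⟩
  · exact Set.disjoint_left.mp hd hv hv'
  · exact hV' v' h1 hv'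

lemma glue_t2 (a b : Z) [CompactSpace Z] : T2Space (Quotient (glueSetoid a b)) := by
  constructor
  intro p q hpq
  obtain ⟨x, rfl⟩ := Quotient.exists_rep p
  obtain ⟨y, rfl⟩ := Quotient.exists_rep q
  have hxy : ¬(glueSetoid a b).r x y := fun h => hpq (Quotient.sound h)
  have hclosedab : IsClosed ({a, b} : Set Z) := (Set.toFinite ({a, b} : Set Z)).isClosed
  by_cases hx : x ∈ ({a, b} : Set Z)
  · have hy : y ∉ ({a, b} : Set Z) := fun hy => hxy (Or.inr ⟨hx, hy⟩)
    obtain ⟨V, V', hVo, hV'o, hsV, hsV', hd⟩ :=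
      NormalSpace.normal ({a, b} : Set Z) {y} hclosedab isClosed_singleton
        (Set.disjoint_singleton_right.mpr hy)
    refine ⟨Quotient.mk _ '' V, Quotient.mk _ '' (V' \ {a, b}), ?_, ?_, ?_, ?_, ?_⟩
    · exact glue_isOpen a b V hVo (Or.inl hsV)
    · exact glue_isOpen a b _ (hV'o.sdiff hclosedab) (Or.inr fun z hz hz' => hz'.2 hz)
    · exact ⟨x, hsV hx, rfl⟩
    · exact ⟨y, ⟨hsV' rfl, hy⟩, rfl⟩
    · exact glue_disjoint a b (hd.mono_right Set.diff_subset) fun z hz hz' => hz'.2 hz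
  · by_cases hy : y ∈ ({a, b} : Set Z)
    · obtain ⟨V, V', hVo, hV'o, hsV, hsV', hd⟩ :=
        NormalSpace.normal ({a, b} : Set Z) {x} hclosedab isClosed_singleton
          (Set.disjoint_singleton_right.mpr hx)
      refine ⟨Quotient.mk _ '' (V' \ {a, b}), Quotient.mk _ '' V, ?_, ?_, ?_, ?_, ?_⟩
      · exact glue_isOpen a b _ (hV'o.sdiff hclosedab) (Or.inr fun z hz hz' => hz'.2 hz)
      · exact glue_isOpen a b V hVo (Or.inl hsV)
      · exact ⟨x, ⟨hsV' rfl, hx⟩, rfl⟩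
      · exact ⟨y, hsV hy, rfl⟩
      · exact (glue_disjoint a b (hd.mono_right Set.diff_subset)
          fun z hz hz' => hz'.2 hz).symm
    · have hne : x ≠ y := fun h => hxy (Or.inl h)
      obtain ⟨V, V', hVo, hV'o, hxV, hyV', hd⟩ := t2_separation hne
      refine ⟨Quotient.mk _ '' (V \ {a, b}), Quotient.mk _ '' (V' \ {a, b}), ?_, ?_, ?_, ?_, ?_⟩
      · exact glue_isOpen a b _ (hVo.sdiff hclosedab) (Or.inr fun z hz hz' => hz'.2 hz)
      · exact glue_isOpen a b _ (hV'o.sdiff hclosedab) (Or.inr fun z hz hz' => hz'.2 hz)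
      · exact ⟨x, ⟨hxV, hx⟩, rfl⟩
      · exact ⟨y, ⟨hyV', hy⟩, rfl⟩
      · exact glue_disjoint a b
          ((hd.mono_left Set.diff_subset).mono_right Set.diff_subset)
          fun z hz hz' => hz'.2 hz

end Glue

theorem stmt_4 {K : Type u} [TopologicalSpace K] [CompactSpace K] [T2Space K]
    [Infinite K] (hK : ¬ Dense {x : K | IsOpen ({x} : Set K)})
    {Z : Type v} [TopologicalSpace Z] [CompactSpace Z] [T2Space Z]
    (f : K → Z) (hcont : Continuous f) (hsurj : Function.Surjective f)
    (hirr : ∀ F : Set K, IsClosed F → F ≠ Set.univ → f '' F ≠ Set.univ) :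
    ∃ (Z' : Type (max u v)) (_ : TopologicalSpace Z'),
      CompactSpace Z' ∧ T2Space Z' ∧
      ∃ (g : Z → Z') (h : K → Z'),
        Continuous g ∧ Function.Surjective g ∧
          (∀ F : Set Z, IsClosed F → F ≠ Set.univ → g '' F ≠ Set.univ) ∧
        Continuous h ∧ Function.Surjective h ∧
          (∀ F : Set K, IsClosed F → F ≠ Set.univ → h '' F ≠ Set.univ) ∧
        h = g ∘ f ∧ ¬ Function.Injective g := by
  -- Step 1: a nonempty open set U of K containing no isolated points
  set S := {x : K | IsOpen ({x} : Set K)} with hS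
  rw [dense_iff_closure_eq] at hK
  have hUne : (closure S)ᶜ.Nonempty := by
    rw [Set.nonempty_compl]; intro h; exact hK (by rw [h])
  set U := (closure S)ᶜ with hUdef
  have hUo : IsOpen U := isClosed_closure.isOpen_compl
  have hUniso : ∀ x ∈ U, ¬ IsOpen ({x} : Set K) := by
    intro x hx hop
    exact hx (subset_closure (by exact hop))
  -- Step 2: W, a nonempty open subset of Z
  set C := f '' Uᶜ with hCdef
  have hCc : IsClosed C := ((hUo.isClosed_compl).isCompact.image hcont).isClosed
  have hCne : C ≠ Set.univ := hirr Uᶜ hUo.isClosed_compl (by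
    intro h
    obtain ⟨x, hx⟩ := hUne
    exact (h ▸ Set.mem_univ x : x ∈ Uᶜ) hx)
  set W := Cᶜ with hWdef
  have hWo : IsOpen W := hCc.isOpen_compl
  have hWne : W.Nonempty := by
    rw [Set.nonempty_compl]; exact hCne
  -- Step 3: no point of W is isolated in Z
  have hWniso : ∀ z ∈ W, ¬ IsOpen ({z} : Set Z) := by
    intro z hz hop
    have hfib : f ⁻¹' {z} ⊆ U := by
      intro x' hx'
      by_contra hxu
      exact hz ⟨x', hxu, hx'⟩
    have hfibo : IsOpen (f ⁻¹' {z}) := hop.preimage hcont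
    obtain ⟨x, hx⟩ := hsurj z
    have hxf : x ∈ f ⁻¹' {z} := hx
    obtain ⟨y, hyf, hyx⟩ : ∃ y ∈ f ⁻¹' {z}, y ≠ x := by
      by_contra hc
      push_neg at hc
      have : f ⁻¹' {z} = {x} := Set.eq_singleton_iff_unique_mem.mpr ⟨hxf, hc⟩
      exact hUniso x (hfib hxf) (this ▸ hfibo)
    have hF : f '' ({x} ∪ (f ⁻¹' {z})ᶜ) = Set.univ := by
      ext w
      simp only [Set.mem_univ, iff_true]
      obtain ⟨x', hx'⟩ := hsurj w
      by_cases hx'f : x' ∈ f ⁻¹' {z}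
      · have : w = z := by rw [← hx']; exact hx'f
        exact ⟨x, Or.inl rfl, by rw [hx, this]⟩
      · exact ⟨x', Or.inr hx'f, hx'⟩
    refine hirr ({x} ∪ (f ⁻¹' {z})ᶜ) (isClosed_singleton.union hfibo.isClosed_compl) ?_ hF
    intro h
    have : y ∈ ({x} : Set K) ∪ (f ⁻¹' {z})ᶜ := h ▸ Set.mem_univ y
    rcases this with h' | h'
    · exact hyx h'
    · exact h' hyf
  -- Step 4: two distinct non-isolated points a b in W
  obtain ⟨a, ha⟩ := hWne
  obtain ⟨b, hb, hba⟩ : ∃ b ∈ W, b ≠ a := by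
    by_contra hc
    push_neg at hc
    have : W = {a} := Set.eq_singleton_iff_unique_mem.mpr ⟨ha, hc⟩
    exact hWniso a ha (this ▸ hWo)
  have hab : a ≠ b := hba.symm
  -- Step 5: the quotient
  set s := glueSetoid a b with hsdef
  have hmemab : a ∈ ({a, b} : Set Z) := Or.inl rfl
  have hmemab' : b ∈ ({a, b} : Set Z) := Or.inr rfl
  refine ⟨ULift.{u} (Quotient s), inferInstance, inferInstance, ?_, ?_⟩
  · exact @ULift.instT2Space _ _ (glue_t2 a b)
  have hg : ∀ (F : Set Z), IsClosed F → F ≠ Set.univ →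
      (fun z => ULift.up (Quotient.mk s z)) '' F ≠ Set.univ := by
    intro F hFc hFne hFim
    have hmk : ∀ q : Quotient s, ∃ y ∈ F, Quotient.mk s y = q := by
      intro q
      have : ULift.up q ∈ (fun z => ULift.up (Quotient.mk s z)) '' F := hFim ▸ Set.mem_univ _
      obtain ⟨y, hy, he⟩ := this
      exact ⟨y, hy, ULift.up_injective he⟩
    -- every point outside {a,b} lies in F
    have houtside : ∀ z : Z, z ∉ ({a, b} : Set Z) → z ∈ F := by
      intro z hz
      obtain ⟨y, hyF, hy⟩ := hmk (Quotient.mk s z)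
      have h : s.r y z := Quotient.exact hy
      rcases h with rfl | ⟨_, h2⟩
      · exact hyF
      · exact absurd h2 hz
    -- one of a, b lies in F
    have hone : a ∈ F ∨ b ∈ F := by
      obtain ⟨y, hyF, hy⟩ := hmk (Quotient.mk s a)
      have h : s.r y a := Quotient.exact hy
      rcases h with rfl | ⟨h1, _⟩
      · exact Or.inl hyF
      · rcases h1 with rfl | rfl
        · exact Or.inl hyF
        · exact Or.inr hyF
    -- both can't lie in F
    have hnotboth : ¬ (a ∈ F ∧ b ∈ F) := by
      rintro ⟨haF, hbF⟩
      apply hFne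
      ext z
      simp only [Set.mem_univ, iff_true]
      by_cases hz : z ∈ ({a, b} : Set Z)
      · rcases hz with rfl | rfl
        · exact haF
        · exact hbF
      · exact houtside z hz
    rcases hone with haF | hbF
    · -- F = {b}ᶜ, so {b} is open, contradicting non-isolation of b
      have hFeq : F = {b}ᶜ := by
        ext z
        constructor
        · intro hz hzb
          exact hnotboth ⟨haF, by rwa [Set.mem_singleton_iff.mp hzb] at hz⟩
        · intro hz
          by_cases hz' : z ∈ ({a, b} : Set Z)
          · rcases hz' with rfl | rfl
            · exact haF
            · exact absurd rfl hz
          · exact houtside z hz'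
      have : IsOpen ({b} : Set Z) := by
        rw [← compl_compl ({b} : Set Z)]
        exact (hFeq ▸ hFc).isOpen_compl
      exact hWniso b hb this
    · have haF : a ∉ F := fun h => hnotboth ⟨h, hbF⟩
      have hFeq : F = {a}ᶜ := by
        ext z
        constructor
        · intro hz hza
          exact haF (by rwa [Set.mem_singleton_iff.mp hza] at hz)
        · intro hz
          by_cases hz' : z ∈ ({a, b} : Set Z)
          · rcases hz' with rfl | rfl
            · exact absurd rfl hz
            · exact hbF
          · exact houtside z hz'
      have : IsOpen ({a} : Set Z) := by
        rw [← compl_compl ({a} : Set Z)]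
        exact (hFeq ▸ hFc).isOpen_compl
      exact hWniso a ha this
  refine ⟨fun z => ULift.up (Quotient.mk s z), fun x => ULift.up (Quotient.mk s (f x)),
    ?_, ?_, hg, ?_, ?_, ?_, rfl, ?_⟩
  · exact continuous_uliftUp.comp continuous_quot_mk
  · intro p
    obtain ⟨q, rfl⟩ := ULift.up_surjective p
    obtain ⟨z, rfl⟩ := Quotient.exists_rep q
    exact ⟨z, rfl⟩
  · exact (continuous_uliftUp.comp continuous_quot_mk).comp hcont
  · intro p
    obtain ⟨q, rfl⟩ := ULift.up_surjective p
    obtain ⟨z, rfl⟩ := Quotient.exists_rep q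
    obtain ⟨x, rfl⟩ := hsurj z
    exact ⟨x, rfl⟩
  · intro F hFc hFne
    have hfFc : IsClosed (f '' F) := (hFc.isCompact.image hcont).isClosed
    have hfFne : f '' F ≠ Set.univ := hirr F hFc hFne
    have := hg (f '' F) hfFc hfFne
    rwa [show (fun x => ULift.up (Quotient.mk s (f x))) '' F
        = (fun z => ULift.up (Quotient.mk s z)) '' (f '' F) by
      rw [Set.image_image]]
  · intro hinj
    apply hab
    apply hinj
    show ULift.up (Quotient.mk s a) = ULift.up (Quotient.mk s b)
    exact congrArg ULift.up (Quotient.sound (Or.inr ⟨hmemab, hmemab'⟩))
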